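/- For integers k with 1 ≤ k ≤ p − 1, the restriction of D to homogeneous polynomials of degree k, D : V_k → V_{k+(q-1)}, is injective, where V_m denotes the space of homogeneous polynomials of degree m in F_q[X,Y]. -/

import Mathlib

open MvPolynomial

theorem my_coeff_pderiv {σ R : Type*} [CommSemiring R] [DecidableEq σ] (i : σ) (m : σ →₀ ℕ)
    (f : MvPolynomial σ R) :
    coeff m (pderiv i f) = (m i + 1) * coeff (m + Finsupp.single i 1) f := by
  induction f using MvPolynomial.induction_on' with
  | add g h hg hh => simp [map_add, coeff_add, hg, hh, mul_add]
  | monomial s a =>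
    rw [pderiv_monomial, coeff_monomial, coeff_monomial]
    by_cases hs : s i = 0
    · have h2 : s ≠ m + Finsupp.single i 1 := by
        intro h; apply_fun (fun g => g i) at h; simp [hs] at h
      rw [if_neg h2, mul_zero]
      split <;> simp [hs]
    · have hle : Finsupp.single i 1 ≤ s := by
        rw [Finsupp.single_le_iff]; omega
      have key : (s - Finsupp.single i 1 = m) ↔ (s = m + Finsupp.single i 1) :=
        tsub_eq_iff_eq_add_of_le hle
      by_cases hsm : s = m + Finsupp.single i 1
      · rw [if_pos (key.mpr hsm), if_pos hsm, hsm]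
        simp [mul_comm]
      · rw [if_neg (fun h => hsm (key.mp h)), if_neg hsm, mul_zero]


/-- The Serre operator `D f = X^q ∂f/∂X + Y^q ∂f/∂Y` on `F_q[X, Y]`. -/
noncomputable def serreD (F : Type*) [Field F] [Fintype F] :
    MvPolynomial (Fin 2) F → MvPolynomial (Fin 2) F :=
  fun f => X 0 ^ Fintype.card F * pderiv 0 f + X 1 ^ Fintype.card F * pderiv 1 f

/-- For `1 ≤ k ≤ p − 1` the restriction of `D` to homogeneous polynomials of
degree `k` is injective. -/
theorem serreD_injective_on_homogeneous (F : Type*) [Field F] [Fintype F]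
    (p n : ℕ) (hp : p.Prime) [CharP F p] (hq : Fintype.card F = p ^ n)
    (k : ℕ) (hk1 : 1 ≤ k) (hk2 : k ≤ p - 1)
    (f : MvPolynomial (Fin 2) F) (hf : f.IsHomogeneous k)
    (h : serreD F f = 0) : f = 0 := by
  set q := Fintype.card F with hqdef
  have hn : n ≠ 0 := by
    rintro rfl
    have := Fintype.one_lt_card (α := F)
    rw [pow_zero] at hq
    omega
  have hpq : p ≤ q := by
    rw [hq]
    calc p = p ^ 1 := (pow_one p).symm
    _ ≤ p ^ n := Nat.pow_le_pow_right hp.pos (by omega)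
  -- key lemma: for any d with coeff d f ≠ 0 and i with ¬ p ∣ d i, contradiction → coeff = 0
  have main : ∀ (i : Fin 2) (d : Fin 2 →₀ ℕ), d (1 - i) < q → ¬ p ∣ d i →
      (X i ^ q * pderiv i f + X (1-i) ^ q * pderiv (1-i) f = 0) → coeff d f = 0 := by
    intro i d hdlt hdi h0
    have hd1 : 1 ≤ d i := Nat.one_le_iff_ne_zero.2 (fun h' => hdi (h' ▸ dvd_zero p))
    set e : Fin 2 →₀ ℕ := Finsupp.single i q + (d - Finsupp.single i 1) with he
    have hcoeff := congrArg (coeff e) h0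
    rw [coeff_add, coeff_zero] at hcoeff
    have hXpow : ∀ j : Fin 2, (X j ^ q : MvPolynomial (Fin 2) F) = monomial (Finsupp.single j q) 1 := by
      intro j; rw [X_pow_eq_monomial]
    rw [hXpow, hXpow, coeff_monomial_mul, coeff_monomial_mul'] at hcoeff
    have hij : (1 - i : Fin 2) ≠ i := by fin_cases i <;> decide
    have he2 : e (1 - i) = d (1 - i) := by
      simp [he, Finsupp.single_apply, hij, hij.symm] -- ?
    rw [if_neg (by
      rw [Finsupp.single_le_iff, he2]
      omega)] at hcoeff
    rw [my_coeff_pderiv] at hcoeff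
    have hde : d - Finsupp.single i 1 + Finsupp.single i 1 = d :=
      tsub_add_cancel_of_le (Finsupp.single_le_iff.2 hd1)
    rw [hde] at hcoeff
    have hnat : ((d - Finsupp.single i 1 : Fin 2 →₀ ℕ) i) = d i - 1 := by
      simp [Finsupp.tsub_apply]
    rw [hnat] at hcoeff
    have hc : ((d i - 1 : ℕ) : F) + 1 = (d i : F) := by
      rw [Nat.cast_sub hd1]; push_cast; ring
    rw [hc, one_mul, add_zero] at hcoeff
    have : (d i : F) ≠ 0 := fun hz => hdi ((CharP.cast_eq_zero_iff F p (d i)).1 hz)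
    exact (mul_eq_zero.1 hcoeff).resolve_left this
  ext d
  rw [coeff_zero]
  by_contra hd
  have hdeg : d 0 + d 1 = k := by
    have := hf hd
    simpa [Finsupp.weight_apply, Finsupp.sum_fintype, Fin.sum_univ_two] using this
  have h' := h
  unfold serreD at h'
  have e10 : (1 - 1 : Fin 2) = 0 := by decide
  have e01 : (1 - 0 : Fin 2) = 1 := by decide
  by_cases hc0 : p ∣ d 0
  · have hc1 : ¬ p ∣ d 1 := by
      intro hc1
      have hdk : p ∣ k := hdeg ▸ Nat.dvd_add hc0 hc1
      have := Nat.le_of_dvd (by omega) hdk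
      omega
    exact hd (main 1 d (by rw [e10]; omega) hc1
      (by rw [e10, add_comm]; exact h'))
  · exact hd (main 0 d (by rw [e01]; omega) hc0 (by rw [e01]; exact h'))
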